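/- Let α, λ, h, S > 0, L > 0, q ≥ 0, and V ∈ [0, 1). The minimum of the function g(u_lo, u_of) = α u_lo³ + λ u_of³ / h + α S ((L - u_lo - u_of) + V (q + u_of))³ over {u_lo ≥ 0, u_of ≥ 0, u_lo + u_of ≤ L} (assuming the unconstrained stationary point is feasible) is attained at u_lo* = (L + V q) [1 + 1/√S + √(α/λ) (1 - V)^{3/2} √h]^{-1} and u_of* = √((α/λ) h (1 - V)) · u_lo*, with minimum value α (L + V q)³ [1 + 1/√S + √(α/λ)(1 - V)^{3/2} √h]^{-2}. -/

import Mathlib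

theorem stmt_12 (α lam h S L q V : ℝ) (hα : 0 < α) (hlam : 0 < lam) (hh : 0 < h)
    (hS : 0 < S) (hL : 0 < L) (hq : 0 ≤ q) (hV : V ∈ Set.Ico (0 : ℝ) 1)
    (hfeas :
      (L + V * q) / (1 + 1 / Real.sqrt S + Real.sqrt (α / lam) * (1 - V) ^ ((3 : ℝ) / 2) * Real.sqrt h)
      + Real.sqrt (α / lam * h * (1 - V)) *
        ((L + V * q) / (1 + 1 / Real.sqrt S + Real.sqrt (α / lam) * (1 - V) ^ ((3 : ℝ) / 2) * Real.sqrt h))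
      ≤ L) :
    IsMinOn
      (fun p : ℝ × ℝ =>
        α * p.1 ^ 3 + lam * p.2 ^ 3 / h + α * S * ((L - p.1 - p.2) + V * (q + p.2)) ^ 3)
      {p : ℝ × ℝ | 0 ≤ p.1 ∧ 0 ≤ p.2 ∧ p.1 + p.2 ≤ L}
      ((L + V * q) / (1 + 1 / Real.sqrt S + Real.sqrt (α / lam) * (1 - V) ^ ((3 : ℝ) / 2) * Real.sqrt h),
       Real.sqrt (α / lam * h * (1 - V)) *
        ((L + V * q) / (1 + 1 / Real.sqrt S + Real.sqrt (α / lam) * (1 - V) ^ ((3 : ℝ) / 2) * Real.sqrt h))) ∧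
    (fun p : ℝ × ℝ =>
        α * p.1 ^ 3 + lam * p.2 ^ 3 / h + α * S * ((L - p.1 - p.2) + V * (q + p.2)) ^ 3)
      ((L + V * q) / (1 + 1 / Real.sqrt S + Real.sqrt (α / lam) * (1 - V) ^ ((3 : ℝ) / 2) * Real.sqrt h),
       Real.sqrt (α / lam * h * (1 - V)) *
        ((L + V * q) / (1 + 1 / Real.sqrt S + Real.sqrt (α / lam) * (1 - V) ^ ((3 : ℝ) / 2) * Real.sqrt h)))
      = α * (L + V * q) ^ 3
          / (1 + 1 / Real.sqrt S + Real.sqrt (α / lam) * (1 - V) ^ ((3 : ℝ) / 2) * Real.sqrt h) ^ 2 := by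
  clear hfeas
  obtain ⟨hV0, hV1⟩ := hV
  have hV1' : (0:ℝ) < 1 - V := by linarith
  have hal : 0 < α / lam := div_pos hα hlam
  have h32 : (1 - V) ^ ((3 : ℝ) / 2) = Real.sqrt (1 - V) ^ 3 := by
    have e : (1 - V) ^ ((3 : ℝ) / 2) = ((1 - V) ^ ((1 : ℝ) / 2)) ^ (3 : ℕ) := by
      rw [← Real.rpow_natCast ((1 - V) ^ ((1 : ℝ) / 2)) 3, ← Real.rpow_mul hV1'.le]
      norm_num
    rw [e, ← Real.sqrt_eq_rpow]
  have hsplit : Real.sqrt (α / lam * h * (1 - V)) =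
      Real.sqrt (α / lam) * Real.sqrt h * Real.sqrt (1 - V) := by
    rw [Real.sqrt_mul (by positivity), Real.sqrt_mul hal.le]
  rw [h32, hsplit]
  set a := Real.sqrt S with ha_def
  set b := Real.sqrt (α / lam) with hb_def
  set w := Real.sqrt h with hw_def
  set t := Real.sqrt (1 - V) with ht_def
  have ha : 0 < a := Real.sqrt_pos.2 hS
  have hb : 0 < b := Real.sqrt_pos.2 hal
  have hw : 0 < w := Real.sqrt_pos.2 hh
  have ht : 0 < t := Real.sqrt_pos.2 hV1'
  have ha2 : a ^ 2 = S := Real.sq_sqrt hS.le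
  have hb2 : b ^ 2 = α / lam := Real.sq_sqrt hal.le
  have hw2 : w ^ 2 = h := Real.sq_sqrt hh.le
  have ht2 : t ^ 2 = 1 - V := Real.sq_sqrt hV1'.le
  clear_value a b w t
  clear ha_def hb_def hw_def ht_def h32 hsplit
  set D := 1 + 1 / a + b * t ^ 3 * w with hD_def
  have hD : 0 < D := by rw [hD_def]; positivity
  have hDa : D * a = a + 1 + a * b * t ^ 3 * w := by
    rw [hD_def]; field_simp
  clear_value D
  set u1 := (L + V * q) / D with hu1_def
  have hLq : 0 < L + V * q := by nlinarith [mul_nonneg hV0 hq]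
  have hu1 : 0 < u1 := div_pos hLq hD
  have hu1D : u1 * D = L + V * q := by
    rw [hu1_def]; field_simp
  clear_value u1
  set u2 := b * w * t * u1 with hu2_def
  have hu2pos : 0 < u2 := by rw [hu2_def]; positivity
  clear_value u2
  set R := (L - u1 - u2) + V * (q + u2) with hR_def
  have hRa : a * R = u1 := by
    rw [hR_def, hu2_def]
    linear_combination (-a) * hu1D + u1 * hDa + (a * b * w * u1 * t) * ht2
  clear_value R
  have hR : 0 < R := by nlinarith [hRa, ha, hu1]
  have stat1 : u1 ^ 2 = S * R ^ 2 := by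
    linear_combination (-(u1 + a * R)) * hRa + R ^ 2 * ha2
  set μ := lam / h with hμ_def
  have hμ : 0 < μ := div_pos hlam hh
  have e1 : μ * b ^ 2 * w ^ 2 = α := by
    rw [hμ_def, hb2, hw2]; field_simp
  have hdiv : ∀ z : ℝ, lam * z ^ 3 / h = μ * z ^ 3 := by
    intro z; rw [hμ_def]; ring
  clear_value μ
  have stat2 : μ * u2 ^ 2 = α * S * (1 - V) * R ^ 2 := by
    rw [hu2_def]
    linear_combination (t ^ 2 * u1 ^ 2) * e1 + α * (1 - V) * stat1 + α * u1 ^ 2 * ht2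
  have hval : α * u1 ^ 3 + μ * u2 ^ 3 + α * S * R ^ 3 = α * u1 ^ 3 * D := by
    have key : a * (α * u1 ^ 3 + μ * u2 ^ 3 + α * S * R ^ 3) = a * (α * u1 ^ 3 * D) := by
      rw [hu2_def]
      linear_combination (a * b * w * t ^ 3 * u1 ^ 3) * e1 +
        α * (a ^ 2 * R ^ 2 + a * R * u1 + u1 ^ 2) * hRa + (-(α * a * R ^ 3)) * ha2 +
        (-(α * u1 ^ 3)) * hDa
    exact mul_left_cancel₀ ha.ne' key
  constructor
  · rw [isMinOn_iff]
    rintro ⟨x, y⟩ ⟨hx, hy, hxy⟩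
    dsimp only
    rw [hdiv, hdiv, show L - u1 - u2 + V * (q + u2) = R from hR_def.symm]
    set Rp := (L - x - y) + V * (q + y) with hRp_def
    have hRp0 : 0 ≤ Rp := by
      rw [hRp_def]
      have hnn : 0 ≤ V * (q + y) := mul_nonneg hV0 (by linarith)
      linarith
    clear_value Rp
    have z1 : (α * u1 ^ 2 - α * S * R ^ 2) * (x - u1) = 0 := by
      have e : α * u1 ^ 2 - α * S * R ^ 2 = 0 := by linear_combination α * stat1
      rw [e]; ring
    have z2 : (μ * u2 ^ 2 - α * S * (1 - V) * R ^ 2) * (y - u2) = 0 := by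
      have e : μ * u2 ^ 2 - α * S * (1 - V) * R ^ 2 = 0 := by linear_combination stat2
      rw [e]; ring
    have master : α * x ^ 3 + μ * y ^ 3 + α * S * Rp ^ 3
        - (α * u1 ^ 3 + μ * u2 ^ 3 + α * S * R ^ 3)
        = α * ((x - u1) ^ 2 * (x + 2 * u1)) + μ * ((y - u2) ^ 2 * (y + 2 * u2))
          + α * S * ((Rp - R) ^ 2 * (Rp + 2 * R))
          + 3 * ((α * u1 ^ 2 - α * S * R ^ 2) * (x - u1))
          + 3 * ((μ * u2 ^ 2 - α * S * (1 - V) * R ^ 2) * (y - u2)) := by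
      rw [hRp_def, hR_def]; ring
    have n1 : 0 ≤ α * ((x - u1) ^ 2 * (x + 2 * u1)) := by
      apply mul_nonneg hα.le
      exact mul_nonneg (sq_nonneg _) (by linarith)
    have n2 : 0 ≤ μ * ((y - u2) ^ 2 * (y + 2 * u2)) := by
      apply mul_nonneg hμ.le
      exact mul_nonneg (sq_nonneg _) (by linarith)
    have n3 : 0 ≤ α * S * ((Rp - R) ^ 2 * (Rp + 2 * R)) := by
      apply mul_nonneg (by positivity)
      exact mul_nonneg (sq_nonneg _) (by linarith)
    linarith [master, n1, n2, n3, z1, z2]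
  · dsimp only
    rw [hdiv, show L - u1 - u2 + V * (q + u2) = R from hR_def.symm, hval, hu1_def]
    field_simp
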